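/- Let F be a field of characteristic 2 in which the squaring map is not surjective (NRC). Suppose that every 2×2 symmetric matrix over F is triangularizable over F (i.e., its characteristic polynomial splits over F). Then every monic polynomial of degree 2 over F with nonzero coefficient on t (i.e., every separable monic quadratic) has a root in F. -/

import Mathlib

theorem stmt_10 {F : Type*} [Field F] [CharP F 2]
    (hNRC : ¬ Function.Surjective fun x : F => x ^ 2)
    (h : ∀ M : Matrix (Fin 2) (Fin 2) F, M.IsSymm →
      M.charpoly.Splits) :
    ∀ b c : F, b ≠ 0 → ∃ x : F, x ^ 2 + b * x + c = 0 := by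
  intro b c hb
  set M : Matrix (Fin 2) (Fin 2) F := !![c/b, c/b; c/b, c/b + b] with hM
  have hsymm : M.IsSymm := by
    ext i j
    fin_cases i <;> fin_cases j <;> simp [hM]
  have hcp : M.charpoly = Polynomial.X ^ 2 + Polynomial.C b * Polynomial.X
      + Polynomial.C c := by
    rw [Matrix.charpoly, Matrix.det_fin_two]
    rw [Matrix.charmatrix_apply_eq, Matrix.charmatrix_apply_eq,
      Matrix.charmatrix_apply_ne _ _ _ (by decide),
      Matrix.charmatrix_apply_ne _ _ _ (by decide)]
    have e00 : M 0 0 = c/b := rfl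
    have e01 : M 0 1 = c/b := rfl
    have e10 : M 1 0 = c/b := rfl
    have e11 : M 1 1 = c/b + b := rfl
    rw [e00, e01, e10, e11]
    simp only [map_add]
    have h1 : (c/b) * (c/b + b) - (c/b)*(c/b) = c := by
      rw [mul_add, add_sub_cancel_left, div_mul_cancel₀ c hb]
    have h2 : (c/b) + (c/b + b) = b := by
      rw [← add_assoc, CharTwo.add_self_eq_zero, zero_add]
    have hD : Polynomial.C ((c/b) * (c/b + b) - (c/b)*(c/b)) = Polynomial.C c :=
      congrArg _ h1
    have hT : Polynomial.C ((c/b) + (c/b + b)) = Polynomial.C b := congrArg _ h2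
    simp only [map_add, map_sub, map_mul] at hD hT
    have hc2 : (2 : Polynomial F) = 0 := by
      simpa using CharP.cast_eq_zero (Polynomial F) 2
    linear_combination hD - Polynomial.X * hT - Polynomial.X * Polynomial.C b * hc2
  have hsp := h M hsymm
  rw [hcp] at hsp
  have hdeg : (Polynomial.X ^ 2 + Polynomial.C b * Polynomial.X
      + Polynomial.C c : Polynomial F).degree = 2 := by
    compute_degree!
  obtain ⟨x, hx⟩ := hsp.exists_eval_eq_zero (by rw [hdeg]; decide)
  refine ⟨x, ?_⟩
  simpa using hx
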